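/- arXiv:2511.10103 — 2 statements merged into one kernel-verified Lean document; each statement's English description precedes it below -/
import Mathlib

section
/- The derivative-in-H bound for the second-difference kernel: for |s| ≥ 3 and H ∈ (0,1), |∂_H ḡ(s,H)| ≤ C(1 + log|s|)·|s|^{H-5/2} for a constant C independent of s and H, where ḡ(s,H) = (-s)_+^{H-1/2} - 2(-1-s)_+^{H-1/2} + (-2-s)_+^{H-1/2}. -/
open Real Set

/-- First derivative of `φ y = log y * y ^ a`. -/
lemma phi_hasDerivAt {a x : ℝ} (hx : 0 < x) :
    HasDerivAt (fun y => Real.log y * y ^ a)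
      (x ^ (a - 1) * (1 + a * Real.log x)) x := by
  have h1 : HasDerivAt Real.log x⁻¹ x := Real.hasDerivAt_log hx.ne'
  have h2 : HasDerivAt (fun y : ℝ => y ^ a) (a * x ^ (a - 1)) x :=
    Real.hasDerivAt_rpow_const (Or.inl hx.ne')
  have h := h1.mul h2
  refine h.congr_deriv ?_
  have hxa : x ^ (a - 1) = x ^ a * x⁻¹ := by
    rw [Real.rpow_sub hx, Real.rpow_one, div_eq_mul_inv]
  rw [hxa]; ring

/-- Second derivative of `φ`. -/
lemma phi_hasDerivAt2 {a x : ℝ} (hx : 0 < x) :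
    HasDerivAt (fun y => y ^ (a - 1) * (1 + a * Real.log y))
      (x ^ (a - 2) * ((a - 1) * (1 + a * Real.log x) + a)) x := by
  have h1 : HasDerivAt (fun y : ℝ => y ^ (a - 1)) ((a - 1) * x ^ (a - 1 - 1)) x :=
    Real.hasDerivAt_rpow_const (Or.inl hx.ne')
  have h2 : HasDerivAt (fun y : ℝ => 1 + a * Real.log y) (a * x⁻¹) x :=
    ((Real.hasDerivAt_log hx.ne').const_mul a).const_add 1
  have h := h1.mul h2
  refine h.congr_deriv ?_
  have e1 : x ^ (a - 1 - 1) = x ^ (a - 2) := by rw [show a - 1 - 1 = a - 2 by ring]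
  have e2 : x ^ (a - 1) * x⁻¹ = x ^ (a - 2) := by
    rw [show a - 2 = a - 1 - 1 by ring, Real.rpow_sub hx (a-1) 1, Real.rpow_one,
      div_eq_mul_inv]
  rw [e1, ← e2]; ring

lemma three_rpow_le {a : ℝ} (ha : -(1/2) ≤ a) : (3:ℝ) ^ (2 - a) ≤ 16 := by
  have h1 : (3:ℝ) ^ (2 - a) ≤ (3:ℝ) ^ ((5:ℝ)/2) :=
    Real.rpow_le_rpow_of_exponent_le (by norm_num) (by linarith)
  have h2 : ((3:ℝ) ^ ((5:ℝ)/2)) = Real.sqrt (3^5) := by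
    rw [Real.sqrt_eq_rpow, ← Real.rpow_natCast 3 5, ← Real.rpow_mul (by norm_num)]
    norm_num
  have h3 : Real.sqrt ((3:ℝ)^5) ≤ Real.sqrt 256 := by
    apply Real.sqrt_le_sqrt; norm_num
  have h4 : Real.sqrt (256:ℝ) = 16 := by
    rw [show (256:ℝ) = 16^2 by norm_num, Real.sqrt_sq (by norm_num)]
  calc (3:ℝ) ^ (2 - a) ≤ Real.sqrt (3^5) := h2 ▸ h1
  _ ≤ 16 := h4 ▸ h3

lemma second_diff_bound {a t : ℝ} (ha : |a| ≤ 1/2) (ht : 3 ≤ t) :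
    |Real.log t * t ^ a - 2 * (Real.log (t - 1) * (t - 1) ^ a)
      + Real.log (t - 2) * (t - 2) ^ a| ≤ 32 * (1 + Real.log t) * t ^ (a - 2) := by
  obtain ⟨ha1, ha2⟩ := abs_le.mp ha
  set M : ℝ := 32 * (1 + Real.log t) * t ^ (a - 2) with hM
  have ht0 : (0:ℝ) < t := by linarith
  have hlogt : 0 ≤ Real.log t := Real.log_nonneg (by linarith)
  -- bound on second derivative on [t-2, t]
  have claimA : ∀ x ∈ Icc (t - 2) t,
      |x ^ (a - 2) * ((a - 1) * (1 + a * Real.log x) + a)| ≤ M := by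
    intro x hx
    obtain ⟨hx1, hx2⟩ := hx
    have hx1' : (1:ℝ) ≤ x := by linarith
    have hx0 : (0:ℝ) < x := by linarith
    have hlx : 0 ≤ Real.log x := Real.log_nonneg hx1'
    have hlx2 : Real.log x ≤ Real.log t := Real.log_le_log hx0 hx2
    have step1 : |(a - 1) * (1 + a * Real.log x) + a| ≤ 2 * (1 + Real.log x) := by
      have h1 : |a - 1| ≤ 3/2 := abs_le.mpr ⟨by linarith, by linarith⟩
      have h2 : |1 + a * Real.log x| ≤ 1 + (1/2) * Real.log x := by
        rw [abs_le]
        constructor <;> nlinarith [abs_le.mp ha, neg_abs_le (a * Real.log x),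
          le_abs_self (a * Real.log x), abs_mul a (Real.log x),
          abs_of_nonneg hlx]
      calc |(a - 1) * (1 + a * Real.log x) + a|
          ≤ |a - 1| * |1 + a * Real.log x| + |a| := by
            rw [← abs_mul]; exact abs_add_le _ _
        _ ≤ (3/2) * (1 + (1/2) * Real.log x) + 1/2 := by
            have := abs_nonneg (1 + a * Real.log x)
            nlinarith
        _ ≤ 2 * (1 + Real.log x) := by nlinarith
    have step2 : x ^ (a - 2) ≤ 16 * t ^ (a - 2) := by
      have h1 : t / 3 ≤ x := by linarith
      have h2 : x ^ (a - 2) ≤ (t / 3) ^ (a - 2) :=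
        Real.rpow_le_rpow_of_nonpos (by linarith) h1 (by linarith)
      have h3 : (t / 3) ^ (a - 2) = t ^ (a - 2) * (3:ℝ) ^ (2 - a) := by
        rw [Real.div_rpow ht0.le (by norm_num), div_eq_mul_inv,
          ← Real.rpow_neg (by norm_num : (0:ℝ) ≤ 3)]
        norm_num
      have h4 : (3:ℝ) ^ (2 - a) ≤ 16 := three_rpow_le ha1
      have h5 : (0:ℝ) ≤ t ^ (a - 2) := (Real.rpow_pos_of_pos ht0 _).le
      nlinarith
    have hxp : (0:ℝ) ≤ x ^ (a - 2) := (Real.rpow_pos_of_pos hx0 _).le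
    rw [abs_mul, abs_of_nonneg hxp]
    calc x ^ (a - 2) * |(a - 1) * (1 + a * Real.log x) + a|
        ≤ (16 * t ^ (a - 2)) * (2 * (1 + Real.log x)) := by
          apply mul_le_mul step2 step1 (abs_nonneg _)
          positivity
      _ ≤ M := by rw [hM]; nlinarith [Real.rpow_pos_of_pos ht0 (a - 2)]
  -- first step MVT : bound on derivative of g x = φ(x+1) - φ x
  have claimB : ∀ x ∈ Icc (t - 2) (t - 1),
      |(x + 1) ^ (a - 1) * (1 + a * Real.log (x + 1))
        - x ^ (a - 1) * (1 + a * Real.log x)| ≤ M := by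
    intro x hx
    obtain ⟨hx1, hx2⟩ := hx
    have key := norm_image_sub_le_of_norm_deriv_le_segment'
      (f := fun y => y ^ (a - 1) * (1 + a * Real.log y))
      (f' := fun y => y ^ (a - 2) * ((a - 1) * (1 + a * Real.log y) + a))
      (a := x) (b := x + 1) (C := M)
      (fun y hy => (phi_hasDerivAt2 (by simp only [mem_Icc] at hy; linarith)).hasDerivWithinAt)
      (fun y hy => by
        simp only [mem_Ico] at hy
        exact claimA y ⟨by linarith, by linarith⟩)
      (x + 1) (by simp [mem_Icc])
    simpa using key
  -- second step MVT
  have hgderiv : ∀ x ∈ Icc (t - 2) (t - 1),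
      HasDerivAt (fun y => Real.log (y + 1) * (y + 1) ^ a - Real.log y * y ^ a)
        ((x + 1) ^ (a - 1) * (1 + a * Real.log (x + 1))
          - x ^ (a - 1) * (1 + a * Real.log x)) x := by
    intro x hx
    obtain ⟨hx1, hx2⟩ := hx
    have h1 : HasDerivAt (fun y => Real.log (y + 1) * (y + 1) ^ a)
        ((x + 1) ^ (a - 1) * (1 + a * Real.log (x + 1))) x := by
      have inner : HasDerivAt (fun y : ℝ => y + 1) 1 x := (hasDerivAt_id x).add_const 1
      have := (phi_hasDerivAt (a := a) (x := x + 1) (by linarith)).comp x inner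
      rw [mul_one] at this
      exact this
    exact h1.sub (phi_hasDerivAt (by linarith))
  have key2 := norm_image_sub_le_of_norm_deriv_le_segment'
    (f := fun y => Real.log (y + 1) * (y + 1) ^ a - Real.log y * y ^ a)
    (f' := fun x => (x + 1) ^ (a - 1) * (1 + a * Real.log (x + 1))
      - x ^ (a - 1) * (1 + a * Real.log x))
    (a := t - 2) (b := t - 1) (C := M)
    (fun x hx => (hgderiv x hx).hasDerivWithinAt)
    (fun x hx => by
      simp only [mem_Ico] at hx
      exact claimB x ⟨hx.1, by linarith⟩)
    (t - 1) (by simp [mem_Icc]; linarith)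
  rw [Real.norm_eq_abs] at key2
  beta_reduce at key2
  rw [show t - 1 + 1 = t by ring, show t - 2 + 1 = t - 1 by ring] at key2
  calc |Real.log t * t ^ a - 2 * (Real.log (t - 1) * (t - 1) ^ a)
      + Real.log (t - 2) * (t - 2) ^ a|
      = |Real.log t * t ^ a - Real.log (t - 1) * (t - 1) ^ a
        - (Real.log (t - 1) * (t - 1) ^ a - Real.log (t - 2) * (t - 2) ^ a)| := by
        ring_nf
    _ ≤ M * (t - 1 - (t - 2)) := key2
    _ = M := by ring_nf

/-- Second-order difference of the Mandelbrot–van Ness kernel: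
`ḡ(s,H) = (-s)_+^{H-1/2} - 2(-1-s)_+^{H-1/2} + (-2-s)_+^{H-1/2}`. -/
noncomputable def gbar (s H : ℝ) : ℝ :=
  (max (-s) 0) ^ (H - 1 / 2) - 2 * (max (-1 - s) 0) ^ (H - 1 / 2)
    + (max (-2 - s) 0) ^ (H - 1 / 2)

/-- Derivative-in-`H` bound for the second-difference kernel: there is a constant `C`,
independent of `s` and `H`, such that for `|s| ≥ 3` and `H ∈ (0,1)`,
`|∂_H ḡ(s,H)| ≤ C (1 + log |s|) |s|^{H-5/2}`. -/
theorem gbar_deriv_decay :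
    ∃ C : ℝ, 0 < C ∧ ∀ s H : ℝ, 3 ≤ |s| → H ∈ Set.Ioo (0 : ℝ) 1 →
      |deriv (fun H' => gbar s H') H| ≤ C * (1 + Real.log |s|) * |s| ^ (H - 5 / 2) := by
  refine ⟨32, by norm_num, ?_⟩
  intro s H hs hH
  obtain ⟨hH0, hH1⟩ := hH
  have habs : (0:ℝ) < |s| := by linarith
  have hlog : 0 ≤ Real.log |s| := Real.log_nonneg (by linarith)
  rcases le_or_gt 0 s with hpos | hneg
  · -- `s ≥ 3`: the function is identically zero
    have hs3 : 3 ≤ s := by rwa [abs_of_nonneg hpos] at hs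
    have hfun : (fun H' => gbar s H') = fun _ => (0:ℝ) := by
      funext H'
      have h1 : max (-s) 0 = 0 := max_eq_right (by linarith)
      have h2 : max (-1 - s) 0 = 0 := max_eq_right (by linarith)
      have h3 : max (-2 - s) 0 = 0 := max_eq_right (by linarith)
      simp only [gbar, h1, h2, h3]; ring
    rw [hfun, deriv_const]
    simp only [abs_zero]
    have := Real.rpow_pos_of_pos habs (H - 5/2)
    nlinarith
  · -- `s ≤ -3`
    have hs3 : 3 ≤ -s := by rw [abs_of_neg hneg] at hs; linarith
    set t := -s with htdef
    have h1 : max (-s) 0 = t := max_eq_left (by linarith)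
    have h2 : max (-1 - s) 0 = t - 1 := by
      rw [max_eq_left (by linarith : (0:ℝ) ≤ -1 - s)]; ring
    have h3 : max (-2 - s) 0 = t - 2 := by
      rw [max_eq_left (by linarith : (0:ℝ) ≤ -2 - s)]; ring
    have ht1 : (0:ℝ) < t - 1 := by simp only [htdef]; linarith
    have ht2 : (0:ℝ) < t - 2 := by simp only [htdef]; linarith
    have hfun : (fun H' => gbar s H')
        = fun H' => t ^ (H' - 1/2) - 2 * (t - 1) ^ (H' - 1/2) + (t - 2) ^ (H' - 1/2) := by
      funext H'
      simp only [gbar, h1, h2, h3]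
    have hd : ∀ c : ℝ, 0 < c → HasDerivAt (fun H' : ℝ => c ^ (H' - 1/2))
        (Real.log c * c ^ (H - 1/2)) H := by
      intro c hc
      have inner : HasDerivAt (fun H' : ℝ => H' - 1/2) 1 H := (hasDerivAt_id H).sub_const _
      have := (Real.hasStrictDerivAt_const_rpow hc (H - 1/2)).hasDerivAt.comp H inner
      exact this.congr_deriv (by ring)
    have hD : HasDerivAt (fun H' => gbar s H')
        (Real.log t * t ^ (H - 1/2) - 2 * (Real.log (t - 1) * (t - 1) ^ (H - 1/2))
          + Real.log (t - 2) * (t - 2) ^ (H - 1/2)) H := by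
      rw [hfun]
      exact ((hd t (by linarith)).sub ((hd (t - 1) ht1).const_mul 2)).add (hd (t - 2) ht2)
    rw [hD.deriv, abs_of_neg hneg, show H - 5/2 = H - 1/2 - 2 by ring]
    exact second_diff_bound (abs_le.mpr ⟨by linarith, by linarith⟩) hs3
end

section
/- Let (Z_i)_{i=1}^n be real random variables with |Cov(Z_i, Z_j)| ≤ K·(|i-j| ∨ 1)^{-3} for all i,j, and let weights w_i satisfy |w_i| ≤ C/(nb), w_i = 0 for |i/n - u| > b, where nb ≥ 1. Then Var(Σ_i w_i Z_i) ≤ C'·/(nb) for a constant C' depending only on C and K. -/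
open MeasureTheory

section Aux
open Finset

noncomputable def G (k : ℕ) : ℝ := ((max (k:ℝ) 1)^3)⁻¹

lemma G_nonneg (k : ℕ) : 0 ≤ G k := by unfold G; positivity

lemma sumsq (n : ℕ) : ∑ k ∈ Finset.range n, (((k:ℝ)+1)^2)⁻¹ ≤ 2 - (max (n:ℝ) 1)⁻¹ := by
  induction n with
  | zero => simp
  | succ m ih =>
    rw [Finset.sum_range_succ]
    rcases Nat.eq_zero_or_pos m with hm | hm
    · subst hm; norm_num
    · have hm1 : (1:ℝ) ≤ m := by exact_mod_cast hm
      have hmax1 : max (m:ℝ) 1 = m := max_eq_left hm1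
      have hmax2 : max ((m:ℝ)+1) 1 = (m:ℝ)+1 := max_eq_left (by linarith)
      rw [hmax1] at ih
      have h1 : (0:ℝ) < m := by linarith
      have key : (((m:ℝ)+1)^2)⁻¹ ≤ (m:ℝ)⁻¹ - ((m:ℝ)+1)⁻¹ := by
        have heq : (m:ℝ)⁻¹ - ((m:ℝ)+1)⁻¹ = ((m:ℝ)*((m:ℝ)+1))⁻¹ := by
          field_simp; ring
        rw [heq]
        apply inv_anti₀ (by positivity)
        nlinarith
      push_cast
      rw [hmax2]
      linarith

lemma Gsum (n : ℕ) : ∑ k ∈ Finset.range (n+1), G k ≤ 3 := by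
  rw [Finset.sum_range_succ']
  have h0 : G 0 = 1 := by unfold G; norm_num
  have hle : ∀ k : ℕ, G (k+1) ≤ (((k:ℝ)+1)^2)⁻¹ := by
    intro k
    unfold G
    have h1 : max ((k:ℝ)+1) 1 = (k:ℝ)+1 := max_eq_left (by linarith [Nat.cast_nonneg (α := ℝ) k])
    push_cast
    rw [h1]
    apply inv_anti₀ (by positivity)
    nlinarith [Nat.cast_nonneg (α := ℝ) k]
  have := Finset.sum_le_sum (fun k (_ : k ∈ Finset.range n) => hle k)
  have h2 := sumsq n
  have h3 : (0:ℝ) ≤ (max (n:ℝ) 1)⁻¹ := by positivity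
  linarith

lemma dist_cast (i j : ℕ) : (Nat.dist i j : ℝ) = |(i:ℝ) - (j:ℝ)| := by
  rcases le_total i j with h | h
  · have h' : (i:ℝ) ≤ (j:ℝ) := Nat.cast_le.mpr h
    rw [Nat.dist_eq_sub_of_le h, abs_sub_comm, abs_of_nonneg (sub_nonneg.mpr h')]
    push_cast [h]; ring
  · have h' : (j:ℝ) ≤ (i:ℝ) := Nat.cast_le.mpr h
    rw [Nat.dist_eq_sub_of_le_right h, abs_of_nonneg (sub_nonneg.mpr h')]
    push_cast [h]; ring

lemma rpow_eq_G (i j : ℕ) : (max |(i:ℝ) - (j:ℝ)| 1) ^ (-(3:ℝ)) = G (Nat.dist i j) := by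
  rw [← dist_cast]
  have hx : (0:ℝ) < max ((Nat.dist i j : ℕ):ℝ) 1 := lt_of_lt_of_le one_pos (le_max_right _ _)
  rw [Real.rpow_neg hx.le]
  unfold G
  congr 1
  rw [show ((3:ℝ)) = ((3:ℕ):ℝ) by norm_num, Real.rpow_natCast]

lemma inner_sum_le (n i : ℕ) (hi : i ∈ Finset.Icc 1 n) :
    ∑ j ∈ Finset.Icc 1 n, G (Nat.dist i j) ≤ 6 := by
  have hi' : i ≤ n := (Finset.mem_Icc.mp hi).2
  rw [← Finset.sum_filter_add_sum_filter_not (Finset.Icc 1 n) (fun j => j ≤ i)]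
  have b1 : ∑ j ∈ (Finset.Icc 1 n).filter (fun j => j ≤ i), G (Nat.dist i j)
      ≤ ∑ k ∈ Finset.range (n+1), G k := by
    have himg := Finset.sum_image (s := (Finset.Icc 1 n).filter (fun j => j ≤ i)) (f := G)
      (g := fun j => Nat.dist i j)
      (by intro x hx y hy hxy
          simp only [Finset.mem_coe, Finset.mem_filter, Finset.mem_Icc] at hx hy
          simp only [Nat.dist] at hxy
          omega)
    refine le_trans (le_of_eq himg.symm) ?_
    apply Finset.sum_le_sum_of_subset_of_nonneg
    · intro k hk
      simp only [Finset.mem_image, Finset.mem_filter, Finset.mem_Icc] at hk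
      obtain ⟨j, ⟨⟨_, _⟩, hji⟩, rfl⟩ := hk
      simp only [Finset.mem_range]
      rw [Nat.dist_eq_sub_of_le_right hji]; omega
    · intro k _ _; exact G_nonneg k
  have b2 : ∑ j ∈ (Finset.Icc 1 n).filter (fun j => ¬ j ≤ i), G (Nat.dist i j)
      ≤ ∑ k ∈ Finset.range (n+1), G k := by
    have himg := Finset.sum_image (s := (Finset.Icc 1 n).filter (fun j => ¬ j ≤ i)) (f := G)
      (g := fun j => Nat.dist i j)
      (by intro x hx y hy hxy
          simp only [Finset.mem_coe, Finset.mem_filter, Finset.mem_Icc, not_le] at hx hy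
          simp only [Nat.dist] at hxy
          omega)
    refine le_trans (le_of_eq himg.symm) ?_
    apply Finset.sum_le_sum_of_subset_of_nonneg
    · intro k hk
      simp only [Finset.mem_image, Finset.mem_filter, Finset.mem_Icc, not_le] at hk
      obtain ⟨j, ⟨⟨_, hjn⟩, hji⟩, rfl⟩ := hk
      simp only [Finset.mem_range]
      rw [Nat.dist_eq_sub_of_le (le_of_lt hji)]; omega
    · intro k _ _; exact G_nonneg k
  have := Gsum n
  linarith



end Aux

/-- Covariance of two real random variables. -/
noncomputable def cov' {Ω : Type*} [MeasurableSpace Ω] (P : Measure Ω) (X Y : Ω → ℝ) : ℝ :=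
  ∫ ω, (X ω - ∫ x, X x ∂P) * (Y ω - ∫ x, Y x ∂P) ∂P

/-- Variance bound for a localized weighted sum: if `|Cov(Z_i, Z_j)| ≤ K (|i-j| ∨ 1)^{-3}` and
the weights satisfy `|w_i| ≤ C/(nb)` with support `|i/n - u| ≤ b`, then
`Var(Σ_i w_i Z_i) ≤ C'/(nb)` with `C'` depending only on `C` and `K`. -/
theorem localized_variance_bound (C K : ℝ) (hC : 0 ≤ C) (hK : 0 ≤ K) :
    ∃ C' : ℝ, ∀ (Ω : Type) [MeasurableSpace Ω] (P : Measure Ω), IsProbabilityMeasure P →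
      ∀ (n : ℕ) (b u : ℝ) (Z : ℕ → Ω → ℝ) (w : ℕ → ℝ),
      1 ≤ n → 0 < b → b < 1 → u ∈ Set.Icc b (1 - b) → 1 ≤ (n : ℝ) * b →
      (∀ i, MemLp (Z i) 2 P) →
      (∀ i j : ℕ, |cov' P (Z i) (Z j)| ≤ K * (max |(i : ℝ) - (j : ℝ)| 1) ^ (-(3 : ℝ))) →
      (∀ i, |w i| ≤ C / ((n : ℝ) * b)) →
      (∀ i : ℕ, b < |(i : ℝ) / n - u| → w i = 0) →
      cov' P (fun ω => ∑ i ∈ Finset.Icc 1 n, w i * Z i ω)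
          (fun ω => ∑ i ∈ Finset.Icc 1 n, w i * Z i ω)
        ≤ C' / ((n : ℝ) * b) := by
  refine ⟨18 * C^2 * K, ?_⟩
  intro Ω _ P hP n b u Z w hn hb hb1 hu hnb hZ hcov hw hsupp
  have hn' : (0:ℝ) < n := by exact_mod_cast hn
  have hnb' : (0:ℝ) < (n:ℝ) * b := by positivity
  set T := Finset.Icc 1 n with hT
  -- integrability
  have hZint : ∀ i, Integrable (Z i) P := fun i => (hZ i).integrable one_le_two
  set μZ : ℕ → ℝ := fun i => ∫ x, Z i x ∂P with hμZ
  set Y : ℕ → Ω → ℝ := fun i ω => Z i ω - μZ i with hY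
  have hYm : ∀ i, MemLp (Y i) 2 P := fun i => (hZ i).sub (memLp_const _)
  have hYint2 : ∀ i j, Integrable (fun ω => Y i ω * Y j ω) P := by
    intro i j
    have h1 : Integrable (fun ω => (Y i ω + Y j ω)^2) P := by
      have := ((hYm i).add (hYm j)).integrable_sq
      simpa using this
    have h2 := (hYm i).integrable_sq
    have h3 := (hYm j).integrable_sq
    have heq : (fun ω => Y i ω * Y j ω)
        = fun ω => (2:ℝ)⁻¹ * (((Y i ω + Y j ω)^2 - Y i ω^2) - Y j ω^2) := by
      funext ω; ring
    rw [heq]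
    exact ((h1.sub h2).sub h3).const_mul _
  -- mean of the sum
  have hES : ∫ ω, (∑ i ∈ T, w i * Z i ω) ∂P = ∑ i ∈ T, w i * μZ i := by
    rw [integral_finset_sum T (fun i _ => (hZint i).const_mul (w i))]
    exact Finset.sum_congr rfl fun i _ => integral_const_mul _ _
  -- bilinearity
  have hkey : cov' P (fun ω => ∑ i ∈ T, w i * Z i ω) (fun ω => ∑ i ∈ T, w i * Z i ω)
      = ∑ i ∈ T, ∑ j ∈ T, (w i * w j) * cov' P (Z i) (Z j) := by
    have hcovij : ∀ i j, cov' P (Z i) (Z j) = ∫ ω, Y i ω * Y j ω ∂P := fun i j => rfl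
    simp only [cov', hES]
    have hfun : ∀ ω, (∑ i ∈ T, w i * Z i ω - ∑ i ∈ T, w i * μZ i)
        * (∑ i ∈ T, w i * Z i ω - ∑ i ∈ T, w i * μZ i)
        = ∑ p ∈ T ×ˢ T, (w p.1 * w p.2) * (Y p.1 ω * Y p.2 ω) := by
      intro ω
      have hd : (∑ i ∈ T, w i * Z i ω - ∑ i ∈ T, w i * μZ i) = ∑ i ∈ T, w i * Y i ω := by
        rw [← Finset.sum_sub_distrib]
        exact Finset.sum_congr rfl fun i _ => (mul_sub _ _ _).symm
      rw [hd, Finset.sum_mul_sum, ← Finset.sum_product']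
      exact Finset.sum_congr rfl fun p _ => by ring
    calc ∫ ω, (∑ i ∈ T, w i * Z i ω - ∑ i ∈ T, w i * μZ i)
          * (∑ i ∈ T, w i * Z i ω - ∑ i ∈ T, w i * μZ i) ∂P
        = ∫ ω, ∑ p ∈ T ×ˢ T, (w p.1 * w p.2) * (Y p.1 ω * Y p.2 ω) ∂P := by
          exact integral_congr_ae (Filter.Eventually.of_forall fun ω => hfun ω)
      _ = ∑ p ∈ T ×ˢ T, (w p.1 * w p.2) * ∫ ω, Y p.1 ω * Y p.2 ω ∂P := by
          rw [integral_finset_sum _ (fun p _ => (hYint2 p.1 p.2).const_mul _)]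
          exact Finset.sum_congr rfl fun p _ => integral_const_mul _ _
      _ = ∑ i ∈ T, ∑ j ∈ T, (w i * w j) * cov' P (Z i) (Z j) := by
          rw [Finset.sum_product]
          exact Finset.sum_congr rfl fun i _ => Finset.sum_congr rfl fun j _ => by
            rw [hcovij]
  -- weight sum bound
  have hwnn : (0:ℝ) ≤ C / ((n:ℝ)*b) := by positivity
  have hcount : ∑ i ∈ T, |w i| ≤ 3 * C := by
    classical
    set S' := T.filter (fun i => w i ≠ 0) with hS'
    have h1 : ∑ i ∈ T, |w i| = ∑ i ∈ S', |w i| := by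
      rw [hS']
      exact (Finset.sum_filter_of_ne (fun i _ h => abs_ne_zero.mp h)).symm
    have hsub : S' ⊆ Finset.Icc ⌈(n:ℝ)*(u-b)⌉₊ ⌊(n:ℝ)*(u+b)⌋₊ := by
      intro i hi
      simp only [hS', Finset.mem_filter] at hi
      have hw0 : ¬ b < |(i:ℝ)/n - u| := fun h => hi.2 (hsupp i h)
      push_neg at hw0
      rw [abs_le] at hw0
      have hup : (i:ℝ)/n ≤ u + b := by linarith [hw0.2]
      have hlo : u - b ≤ (i:ℝ)/n := by linarith [hw0.1]
      have hieq : (n:ℝ) * ((i:ℝ)/n) = (i:ℝ) := by field_simp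
      have hlow : (n:ℝ)*(u-b) ≤ i := by
        calc (n:ℝ)*(u-b) ≤ (n:ℝ) * ((i:ℝ)/n) := mul_le_mul_of_nonneg_left hlo hn'.le
          _ = (i:ℝ) := hieq
      have hhigh : (i:ℝ) ≤ (n:ℝ)*(u+b) := by
        calc (i:ℝ) = (n:ℝ) * ((i:ℝ)/n) := hieq.symm
          _ ≤ (n:ℝ)*(u+b) := mul_le_mul_of_nonneg_left hup hn'.le
      rw [Finset.mem_Icc]
      exact ⟨Nat.ceil_le.mpr hlow, Nat.le_floor hhigh⟩
    have hcard : (S'.card : ℝ) ≤ 3 * ((n:ℝ)*b) := by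
      have hc1 := Finset.card_le_card hsub
      set a := ⌈(n:ℝ)*(u-b)⌉₊ with ha
      set c := ⌊(n:ℝ)*(u+b)⌋₊ with hc
      have hub : (0:ℝ) ≤ (n:ℝ)*(u+b) := by nlinarith [hu.1]
      by_cases hac : a ≤ c + 1
      · have hcic : (Finset.Icc a c).card = c + 1 - a := Nat.card_Icc a c
        have hcast : ((Finset.Icc a c).card : ℝ) = (c:ℝ) + 1 - a := by
          rw [hcic, Nat.cast_sub hac]; push_cast; ring
        have h2 : ((c:ℝ)) ≤ (n:ℝ)*(u+b) := Nat.floor_le hub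
        have h3 : (n:ℝ)*(u-b) ≤ a := Nat.le_ceil _
        have h4 : (S'.card:ℝ) ≤ ((Finset.Icc a c).card : ℝ) := by exact_mod_cast hc1
        rw [hcast] at h4
        nlinarith [hnb]
      · have hemp : Finset.Icc a c = ∅ := Finset.Icc_eq_empty (by omega)
        rw [hemp] at hc1
        simp only [Finset.card_empty, Nat.le_zero] at hc1
        rw [hc1]
        push_cast
        nlinarith [hnb]
    calc ∑ i ∈ T, |w i| = ∑ i ∈ S', |w i| := h1
      _ ≤ S'.card • (C / ((n:ℝ)*b)) := Finset.sum_le_card_nsmul _ _ _ (fun i _ => hw i)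
      _ = (S'.card : ℝ) * (C / ((n:ℝ)*b)) := nsmul_eq_mul _ _
      _ ≤ (3 * ((n:ℝ)*b)) * (C / ((n:ℝ)*b)) := mul_le_mul_of_nonneg_right hcard hwnn
      _ = 3 * C := by field_simp
  -- final estimate
  have hterm : ∀ i ∈ T, ∑ j ∈ T, (w i * w j) * cov' P (Z i) (Z j)
      ≤ |w i| * (C / ((n:ℝ)*b) * (K * 6)) := by
    intro i hi
    have step1 : ∀ j ∈ T, (w i * w j) * cov' P (Z i) (Z j)
        ≤ (|w i| * (C/((n:ℝ)*b)) * K) * G (Nat.dist i j) := by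
      intro j _
      have h2 : |cov' P (Z i) (Z j)| ≤ K * G (Nat.dist i j) := by
        have := hcov i j; rwa [rpow_eq_G] at this
      have h3 : |w j| * |cov' P (Z i) (Z j)| ≤ (C/((n:ℝ)*b)) * (K * G (Nat.dist i j)) :=
        mul_le_mul (hw j) h2 (abs_nonneg _) hwnn
      calc (w i * w j) * cov' P (Z i) (Z j)
          ≤ |(w i * w j) * cov' P (Z i) (Z j)| := le_abs_self _
        _ = |w i| * (|w j| * |cov' P (Z i) (Z j)|) := by rw [abs_mul, abs_mul]; ring
        _ ≤ |w i| * ((C/((n:ℝ)*b)) * (K * G (Nat.dist i j))) :=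
            mul_le_mul_of_nonneg_left h3 (abs_nonneg _)
        _ = (|w i| * (C/((n:ℝ)*b)) * K) * G (Nat.dist i j) := by ring
    have hcoef : (0:ℝ) ≤ |w i| * (C/((n:ℝ)*b)) * K := by positivity
    calc ∑ j ∈ T, (w i * w j) * cov' P (Z i) (Z j)
        ≤ ∑ j ∈ T, (|w i| * (C/((n:ℝ)*b)) * K) * G (Nat.dist i j) := Finset.sum_le_sum step1
      _ = (|w i| * (C/((n:ℝ)*b)) * K) * ∑ j ∈ T, G (Nat.dist i j) := by
          rw [Finset.mul_sum]
      _ ≤ (|w i| * (C/((n:ℝ)*b)) * K) * 6 :=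
          mul_le_mul_of_nonneg_left (inner_sum_le n i hi) hcoef
      _ = |w i| * (C / ((n:ℝ)*b) * (K * 6)) := by ring
  rw [hkey]
  calc ∑ i ∈ T, ∑ j ∈ T, (w i * w j) * cov' P (Z i) (Z j)
      ≤ ∑ i ∈ T, |w i| * (C / ((n:ℝ)*b) * (K * 6)) := Finset.sum_le_sum hterm
    _ = (∑ i ∈ T, |w i|) * (C / ((n:ℝ)*b) * (K * 6)) := (Finset.sum_mul _ _ _).symm
    _ ≤ (3*C) * (C / ((n:ℝ)*b) * (K * 6)) :=
        mul_le_mul_of_nonneg_right hcount (by positivity)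
    _ = 18 * C^2 * K / ((n:ℝ)*b) := by field_simp; ring
end
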